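/- Let s ≤ t be positive integers with ⌊t/s⌋ = r and ⌈t/s⌉ = r+1. Suppose the discrete two-dimensional torus (ℤ/tℤ)² is covered by s squares A₁, A₂, …, A_s of side s. Fix a coordinate direction γ ∈ {1,2}. Then the number of γ-columns that meet at least r+2 of the squares A₁,…,A_s is at most s² − t(r+1). -/
import Mathlib

open Set

noncomputable section

def square (t s : ℕ) (x0 : Fin 2 → ZMod t) : Set (Fin 2 → ZMod t) :=
  {x | ∀ i, ∃ j : ℕ, j < s ∧ x i = x0 i + (j : ZMod t)}

def column (t : ℕ) (γ : Fin 2) (c : ZMod t) : Set (Fin 2 → ZMod t) :=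
  {x | ∀ i, i ≠ γ → x i = c}

theorem few_columns_meet_many_squares (s t r : ℕ) (hs : 0 < s) (hst : s ≤ t)
    (hfloor : ⌊(t : ℚ) / (s : ℚ)⌋ = (r : ℤ))
    (hceil : ⌈(t : ℚ) / (s : ℚ)⌉ = (r : ℤ) + 1)
    (b : Fin s → Fin 2 → ZMod t)
    (hcov : (⋃ j, square t s (b j)) = Set.univ)
    (γ : Fin 2) :
    ({c : ZMod t |
        r + 2 ≤ {j : Fin s | (column t γ c ∩ square t s (b j)).Nonempty}.ncard}.ncard : ℤ)
      ≤ (s : ℤ)^2 - t * (r + 1) := by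
  classical
  haveI : NeZero t := ⟨by omega⟩
  -- the other coordinate
  set δ : Fin 2 := 1 - γ with hδ
  have hother : ∀ i : Fin 2, i ≠ γ → i = δ := by
    revert γ; decide
  have hδγ : δ ≠ γ := by revert γ; decide
  -- r*s < t
  have hrt : r * s < t := by
    have h1 : (r : ℚ) < (t : ℚ) / (s : ℚ) := by
      have h2 : (r : ℤ) < ⌈(t : ℚ) / (s : ℚ)⌉ := by rw [hceil]; omega
      exact_mod_cast Int.lt_ceil.mp h2
    have hs' : (0:ℚ) < (s:ℚ) := by exact_mod_cast hs
    rw [lt_div_iff₀ hs'] at h1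
    exact_mod_cast h1
  -- column meets square iff
  have hmeet : ∀ (c : ZMod t) (j : Fin s),
      (column t γ c ∩ square t s (b j)).Nonempty ↔ ∃ k : ℕ, k < s ∧ c = b j δ + k := by
    intro c j
    constructor
    · rintro ⟨x, hcol, hsq⟩
      obtain ⟨k, hk, hxk⟩ := hsq δ
      exact ⟨k, hk, by rw [← hcol δ hδγ, hxk]⟩
    · rintro ⟨k, hk, hck⟩
      refine ⟨fun i => if i = γ then b j γ else c, fun i hi => by simp [hi], fun i => ?_⟩
      by_cases hi : i = γ
      · exact ⟨0, hs, by simp [hi]⟩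
      · rw [hother i hi]; exact ⟨k, hk, by simp [hδγ, hck]⟩
  -- N c
  set N : ZMod t → ℕ := fun c =>
    (Finset.univ.filter fun j : Fin s => (column t γ c ∩ square t s (b j)).Nonempty).card
    with hN
  -- each square meets exactly s columns
  have hcols : ∀ j : Fin s,
      (Finset.univ.filter fun c : ZMod t =>
        (column t γ c ∩ square t s (b j)).Nonempty).card = s := by
    intro j
    have : (Finset.univ.filter fun c : ZMod t =>
        (column t γ c ∩ square t s (b j)).Nonempty)
        = (Finset.range s).image (fun k : ℕ => b j δ + k) := by
      ext c
      simp only [Finset.mem_filter, Finset.mem_univ, true_and, Finset.mem_image,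
        Finset.mem_range, hmeet]
      constructor
      · rintro ⟨k, hk, hck⟩; exact ⟨k, hk, hck.symm⟩
      · rintro ⟨k, hk, hck⟩; exact ⟨k, hk, hck.symm⟩
    rw [this, Finset.card_image_of_injOn, Finset.card_range]
    intro k1 h1 k2 h2 h
    simp only [Finset.coe_range, Set.mem_Iio] at h1 h2
    have : (k1 : ZMod t) = (k2 : ZMod t) := by
      exact add_left_cancel h
    have := congrArg ZMod.val this
    rwa [ZMod.val_cast_of_lt (by omega), ZMod.val_cast_of_lt (by omega)] at this
  -- double counting sum
  have hsum : ∑ c : ZMod t, N c = s * s := by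
    have : ∑ c : ZMod t, N c = ∑ j : Fin s,
        (Finset.univ.filter fun c : ZMod t =>
          (column t γ c ∩ square t s (b j)).Nonempty).card := by
      simp only [hN, Finset.card_filter]
      exact Finset.sum_comm
    rw [this]
    simp [hcols, ZMod.card]
  -- each column meets at least r+1 squares
  have hlb : ∀ c : ZMod t, r + 1 ≤ N c := by
    intro c
    have hcover : (Finset.univ : Finset (ZMod t)) ⊆
        (Finset.univ.filter fun j : Fin s =>
          (column t γ c ∩ square t s (b j)).Nonempty).biUnion
          (fun j => (Finset.range s).image (fun k : ℕ => b j γ + k)) := by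
      intro a _
      have hx : (fun i : Fin 2 => if i = γ then a else c) ∈ ⋃ j, square t s (b j) := by
        rw [hcov]; trivial
      obtain ⟨j, hj⟩ := Set.mem_iUnion.mp hx
      obtain ⟨k, hk, hak⟩ := hj γ
      simp only [if_pos rfl] at hak
      refine Finset.mem_biUnion.mpr ⟨j, ?_, ?_⟩
      · simp only [Finset.mem_filter, Finset.mem_univ, true_and]
        exact ⟨fun i => if i = γ then a else c, fun i hi => by simp [hi], hj⟩
      · exact Finset.mem_image.mpr ⟨k, Finset.mem_range.mpr hk, hak.symm⟩
    have h1 : t ≤ N c * s := by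
      calc t = Fintype.card (ZMod t) := (ZMod.card t).symm
        _ = (Finset.univ : Finset (ZMod t)).card := rfl
        _ ≤ _ := Finset.card_le_card hcover
        _ ≤ ∑ j ∈ (Finset.univ.filter fun j : Fin s =>
              (column t γ c ∩ square t s (b j)).Nonempty),
              ((Finset.range s).image (fun k : ℕ => b j γ + k)).card :=
            Finset.card_biUnion_le
        _ ≤ ∑ j ∈ (Finset.univ.filter fun j : Fin s =>
              (column t γ c ∩ square t s (b j)).Nonempty), s := by
            refine Finset.sum_le_sum fun j _ => ?_
            calc _ ≤ (Finset.range s).card := Finset.card_image_le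
              _ = s := Finset.card_range s
        _ = N c * s := by rw [Finset.sum_const, smul_eq_mul]
    nlinarith [hrt, h1]
  -- the set of bad columns
  set M : Finset (ZMod t) := Finset.univ.filter (fun c => r + 2 ≤ N c) with hM
  have hMcard : (r + 1) * t + M.card ≤ s * s := by
    rw [← hsum]
    have hsplit : ∑ c : ZMod t, N c = ∑ c ∈ M, N c + ∑ c ∈ Mᶜ, N c :=
      (Finset.sum_add_sum_compl M N).symm
    have h1 : (r + 2) * M.card ≤ ∑ c ∈ M, N c := by
      calc (r + 2) * M.card = ∑ _c ∈ M, (r + 2) := by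
            rw [Finset.sum_const, smul_eq_mul, mul_comm]
        _ ≤ ∑ c ∈ M, N c := Finset.sum_le_sum fun c hc => (Finset.mem_filter.mp hc).2
    have h2 : (r + 1) * Mᶜ.card ≤ ∑ c ∈ Mᶜ, N c := by
      rw [mul_comm]
      calc Mᶜ.card * (r+1) = ∑ _c ∈ Mᶜ, (r+1) := by rw [Finset.sum_const, smul_eq_mul]
        _ ≤ _ := Finset.sum_le_sum fun c _ => hlb c
    have hcardc : M.card + Mᶜ.card = t := by
      rw [Finset.card_add_card_compl]
      simp [ZMod.card]
    have hexp : (r + 1) * t = (r + 1) * M.card + (r + 1) * Mᶜ.card := by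
      rw [← Nat.mul_add, hcardc]
    nlinarith [h1, h2, hsplit, hexp]
  -- relate ncard to M.card
  have hfin : {c : ZMod t |
      r + 2 ≤ {j : Fin s | (column t γ c ∩ square t s (b j)).Nonempty}.ncard}.ncard
      = M.card := by
    have hjj : ∀ c : ZMod t,
        {j : Fin s | (column t γ c ∩ square t s (b j)).Nonempty}.ncard = N c := by
      intro c
      rw [Set.ncard_eq_toFinset_card']
      congr 1
      ext j
      simp
    have : {c : ZMod t |
        r + 2 ≤ {j : Fin s | (column t γ c ∩ square t s (b j)).Nonempty}.ncard}
        = ↑M := by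
      ext c
      simp [hM, hjj c]
    rw [this, Set.ncard_coe_finset]
  rw [hfin]
  have := hMcard
  push_cast
  nlinarith [this]

end
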